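/- Let d ≥ 2, c > 0 and α ∈ (0,1]. Let u : ℝ^d → ℂ be continuously differentiable with u and ∇u bounded on ℝ^d, ∫_{ℝ^d} |∇u(x)|² dx < ∞, and suppose u(x) = 0 for every x with |x| = c·(log(1+n))^α for some integer n ≥ 0. Then there exist constants c₀ > 0 and C > 0 such that |u(x)| ≤ C e^{−c₀|x|} for all x ∈ ℝ^d. -/

import Mathlib

open MeasureTheory Filter Real
set_option maxHeartbeats 1000000

lemma real_rpow_add_le_add_rpow {a b p : ℝ} (ha : 0 ≤ a) (hb : 0 ≤ b) (hp : 0 ≤ p)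
    (hp1 : p ≤ 1) : (a + b) ^ p ≤ a ^ p + b ^ p := by
  have h := NNReal.rpow_add_le_add_rpow a.toNNReal b.toNNReal hp hp1
  have := NNReal.coe_le_coe.2 h
  push_cast [NNReal.coe_rpow] at this
  rwa [Real.coe_toNNReal _ ha, Real.coe_toNNReal _ hb] at this

theorem stmt13 (d : ℕ) (hd : 2 ≤ d) (c α : ℝ) (hc : 0 < c) (hα : α ∈ Set.Ioc (0:ℝ) 1)
    (u : EuclideanSpace ℝ (Fin d) → ℂ) (hu : ContDiff ℝ 1 u)
    (hub : ∃ M : ℝ, ∀ x, ‖u x‖ ≤ M)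
    (hgb : ∃ M : ℝ, ∀ x, ‖fderiv ℝ u x‖ ≤ M)
    (hint : Integrable (fun x : EuclideanSpace ℝ (Fin d) => ‖fderiv ℝ u x‖^2) volume)
    (hzero : ∀ x : EuclideanSpace ℝ (Fin d),
      (∃ n : ℕ, ‖x‖ = c * Real.log (1 + (n:ℝ)) ^ α) → u x = 0) :
    ∃ c₀ C : ℝ, 0 < c₀ ∧ 0 < C ∧
      ∀ x : EuclideanSpace ℝ (Fin d), ‖u x‖ ≤ C * Real.exp (-c₀ * ‖x‖) := by
  obtain ⟨hα0, hα1⟩ := hα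
  obtain ⟨M, hM⟩ := hgb
  have hM0 : 0 ≤ M := le_trans (norm_nonneg _) (hM 0)
  set c₀ : ℝ := α / (2 * c) with hc₀def
  have hc₀ : 0 < c₀ := div_pos hα0 (by linarith)
  set C : ℝ := 2 * M * c + M * c * Real.exp (c₀ * c) + 1 with hCdef
  have hC : 0 < C := by
    have : 0 ≤ 2 * M * c := by positivity
    have : 0 ≤ M * c * Real.exp (c₀ * c) := by positivity
    nlinarith [mul_nonneg (mul_nonneg (by norm_num : (0:ℝ) ≤ 2) hM0) hc.le]
  refine ⟨c₀, C, hc₀, hC, fun x => ?_⟩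
  -- radii
  set rr : ℕ → ℝ := fun n => c * Real.log (1 + (n:ℝ)) ^ α with hrr
  have hrr0 : rr 0 = 0 := by
    simp [hrr, Real.rpow_def_of_pos, Real.zero_rpow hα0.ne']
  -- Lipschitz bound
  have hlip : ∀ y z : EuclideanSpace ℝ (Fin d), ‖u y - u z‖ ≤ M * ‖y - z‖ := by
    intro y z
    exact Convex.norm_image_sub_le_of_norm_fderiv_le
      (fun w _ => (hu.differentiable one_ne_zero) w) (fun w _ => hM w) convex_univ
      (Set.mem_univ z) (Set.mem_univ y)
  set r : ℝ := ‖x‖ with hr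
  have hr0 : 0 ≤ r := norm_nonneg x
  -- find N with r < rr N
  have htend : Filter.Tendsto rr Filter.atTop Filter.atTop := by
    apply Filter.Tendsto.const_mul_atTop hc
    apply (tendsto_rpow_atTop hα0).comp
    apply Real.tendsto_log_atTop.comp
    exact Filter.tendsto_atTop_add_const_left _ 1 tendsto_natCast_atTop_atTop
  obtain ⟨N, hN⟩ := (htend.eventually_gt_atTop r).exists
  -- greatest k ≤ N with rr k ≤ r
  obtain ⟨k, hPk, hPk1⟩ : ∃ k : ℕ, rr k ≤ r ∧ r < rr (k + 1) := by
    classical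
    refine ⟨Nat.findGreatest (fun n => rr n ≤ r) N, ?_, ?_⟩
    · refine Nat.findGreatest_spec (P := fun n => rr n ≤ r) (Nat.zero_le N) ?_
      simpa [hrr0] using hr0
    · have hPk : rr (Nat.findGreatest (fun n => rr n ≤ r) N) ≤ r :=
        Nat.findGreatest_spec (P := fun n => rr n ≤ r) (Nat.zero_le N)
          (by simpa [hrr0] using hr0)
      have hkN : Nat.findGreatest (fun n => rr n ≤ r) N ≠ N := by
        intro h; rw [h] at hPk; exact absurd hPk (not_le.2 hN)
      have hklt : Nat.findGreatest (fun n => rr n ≤ r) N < N :=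
        lt_of_le_of_ne (Nat.findGreatest_le N) hkN
      have := Nat.findGreatest_is_greatest (P := fun n => rr n ≤ r)
        (Nat.lt_succ_self _) hklt
      exact not_le.1 this
  -- u vanishes on sphere of radius rr k
  have hlog1 : (0:ℝ) ≤ Real.log (1 + (k:ℝ)) := by
    apply Real.log_nonneg; push_cast; linarith [Nat.cast_nonneg (α := ℝ) k]
  have hrrk0 : 0 ≤ rr k := by
    apply mul_nonneg hc.le (Real.rpow_nonneg hlog1 α)
  -- key bound : ‖u x‖ ≤ M * (r - rr k)
  have hkey : ‖u x‖ ≤ M * (r - rr k) := by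
    rcases eq_or_lt_of_le hr0 with h0 | h0
    · have : u x = 0 := by
        apply hzero
        refine ⟨0, ?_⟩
        rw [← hr, ← h0]
        norm_num [Real.zero_rpow hα0.ne']
      rw [this]; simp only [norm_zero]
      exact mul_nonneg hM0 (by linarith)
    · set y : EuclideanSpace ℝ (Fin d) := (rr k / r) • x with hy
      have hny : ‖y‖ = rr k := by
        rw [hy, norm_smul, Real.norm_eq_abs, abs_of_nonneg (div_nonneg hrrk0 hr0), ← hr]
        field_simp
      have huy : u y = 0 := hzero y ⟨k, hny⟩
      have : ‖u x - u y‖ ≤ M * ‖x - y‖ := hlip x y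
      rw [huy, sub_zero] at this
      refine this.trans ?_
      have : ‖x - y‖ = r - rr k := by
        have : x - y = (1 - rr k / r) • x := by rw [hy, sub_smul, one_smul]
        rw [this, norm_smul, Real.norm_eq_abs, ← hr,
          abs_of_nonneg (by rw [sub_nonneg]; exact div_le_one_of_le₀ hPk hr0)]
        field_simp
      rw [this]
  -- gap bound: rr (k+1) - rr k ≤ c * (1/(1+k))^α
  have hgap : rr (k + 1) - rr k ≤ c * (1 / (1 + (k:ℝ))) ^ α := by
    have h1k : (0:ℝ) < 1 + (k:ℝ) := by positivity
    have hΔ0 : 0 ≤ Real.log (1 + ((k:ℝ)+1)) - Real.log (1 + (k:ℝ)) := by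
      rw [sub_nonneg]; apply Real.log_le_log h1k; linarith
    have hsub : Real.log (1 + ((k:ℝ)+1)) ^ α ≤
        Real.log (1 + (k:ℝ)) ^ α +
          (Real.log (1 + ((k:ℝ)+1)) - Real.log (1 + (k:ℝ))) ^ α := by
      have := real_rpow_add_le_add_rpow hlog1 hΔ0 hα0.le hα1
      simpa using this
    have hΔle : Real.log (1 + ((k:ℝ)+1)) - Real.log (1 + (k:ℝ)) ≤ 1 / (1 + (k:ℝ)) := by
      rw [← Real.log_div (by linarith) h1k.ne']
      have h2 : (1 + ((k:ℝ)+1)) / (1 + (k:ℝ)) = 1 + 1 / (1 + (k:ℝ)) := by field_simp; ring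
      rw [h2]
      have := Real.add_one_le_exp (1 / (1 + (k:ℝ)))
      calc Real.log (1 + 1/(1+(k:ℝ))) ≤ Real.log (Real.exp (1/(1+(k:ℝ)))) := by
            apply Real.log_le_log (by positivity); linarith
        _ = 1 / (1 + (k:ℝ)) := Real.log_exp _
    have hΔrpow : (Real.log (1 + ((k:ℝ)+1)) - Real.log (1 + (k:ℝ))) ^ α ≤
        (1 / (1 + (k:ℝ))) ^ α := Real.rpow_le_rpow hΔ0 hΔle hα0.le
    have hrk1 : rr (k+1) = c * Real.log (1 + ((k:ℝ)+1)) ^ α := by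
      have : ((k+1:ℕ):ℝ) = (k:ℝ)+1 := by push_cast; ring
      simp only [hrr, this]
    have hrk : rr k = c * Real.log (1 + (k:ℝ)) ^ α := rfl
    rw [hrk1, hrk]
    have h2 : Real.log (1 + ((k:ℝ)+1)) ^ α ≤
        Real.log (1 + (k:ℝ)) ^ α + (1 / (1 + (k:ℝ))) ^ α := by linarith
    have h3 := mul_le_mul_of_nonneg_left h2 hc.le
    rw [mul_add] at h3
    linarith
  -- now split on k
  rcases Nat.eq_zero_or_pos k with hk0 | hk1
  · -- r < rr 1 ≤ c, so crude bound
    have hrc : r ≤ c := by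
      have h1 : rr (k+1) = c * Real.log 2 ^ α := by
        rw [hk0]
        show c * Real.log (1 + ((1:ℕ):ℝ)) ^ α = _
        norm_num
      have h2 : Real.log 2 ^ α ≤ 1 := by
        apply Real.rpow_le_one (Real.log_nonneg (by norm_num)) ?_ hα0.le
        have := Real.log_le_sub_one_of_pos (by norm_num : (0:ℝ) < 2)
        linarith
      have := hPk1
      rw [h1] at this
      nlinarith
    have h3 : ‖u x‖ ≤ M * c := by
      have : rr k = 0 := by rw [hk0, hrr0]
      rw [this, sub_zero] at hkey
      exact hkey.trans (mul_le_mul_of_nonneg_left hrc hM0)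
    calc ‖u x‖ ≤ M * c := h3
      _ ≤ M * c * Real.exp (c₀ * c) * Real.exp (-c₀ * r) := by
          rw [mul_assoc, ← Real.exp_add]
          have h4 : 0 ≤ c₀ * c + -c₀ * r := by
            have := mul_le_mul_of_nonneg_left hrc hc₀.le; nlinarith
          nlinarith [Real.one_le_exp h4, mul_nonneg hM0 hc.le]
      _ ≤ C * Real.exp (-c₀ * r) := by
          apply mul_le_mul_of_nonneg_right _ (Real.exp_pos _).le
          have : 0 ≤ 2 * M * c := by positivity
          linarith
  · -- k ≥ 1 : exponential gain
    have h1k : (1:ℝ) ≤ (k:ℝ) := by exact_mod_cast hk1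
    have hlogge : (1:ℝ) ≤ Real.log (1 + ((k:ℝ)+1)) := by
      have h3 : (3:ℝ) ≤ 1 + ((k:ℝ)+1) + 1 := by linarith
      have := Real.add_one_le_exp (1:ℝ)
      have he : Real.exp 1 ≤ 1 + ((k:ℝ)+1) := by
        have := Real.exp_one_lt_d9; linarith
      calc (1:ℝ) = Real.log (Real.exp 1) := (Real.log_exp 1).symm
        _ ≤ Real.log (1 + ((k:ℝ)+1)) := Real.log_le_log (Real.exp_pos 1) he
    have hrle : r ≤ c * Real.log (1 + ((k:ℝ)+1)) := by
      have h1 : rr (k+1) = c * Real.log (1 + ((k:ℝ)+1)) ^ α := by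
        have : ((k+1:ℕ):ℝ) = (k:ℝ)+1 := by push_cast; ring
        simp only [hrr, this]
      have h2 : Real.log (1 + ((k:ℝ)+1)) ^ α ≤ Real.log (1 + ((k:ℝ)+1)) := by
        nth_rewrite 2 [← Real.rpow_one (Real.log (1 + ((k:ℝ)+1)))]
        exact Real.rpow_le_rpow_of_exponent_le hlogge hα1
      nlinarith [hPk1, h1 ▸ hPk1]
    -- exp(c₀ r) ≤ (2+k)^(α/2) ≤ 2 * (1+k)^α
    have hexp : Real.exp (c₀ * r) ≤ 2 * (1 + (k:ℝ)) ^ α := by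
      have e1 : Real.exp (c₀ * r) ≤ (1 + ((k:ℝ)+1)) ^ (α/2) := by
        have : c₀ * r ≤ (α/2) * Real.log (1 + ((k:ℝ)+1)) := by
          have := mul_le_mul_of_nonneg_left hrle hc₀.le
          rw [hc₀def] at this ⊢
          calc α / (2*c) * r ≤ α / (2*c) * (c * Real.log (1 + ((k:ℝ)+1))) := this
            _ = (α/2) * Real.log (1 + ((k:ℝ)+1)) := by field_simp
        calc Real.exp (c₀ * r) ≤ Real.exp ((α/2) * Real.log (1 + ((k:ℝ)+1))) :=
              Real.exp_le_exp.2 this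
          _ = (1 + ((k:ℝ)+1)) ^ (α/2) := by
              rw [Real.rpow_def_of_pos (by positivity), mul_comm]
      have e2 : (1 + ((k:ℝ)+1)) ^ (α/2) ≤ (2 * (1 + (k:ℝ))) ^ (α/2) := by
        apply Real.rpow_le_rpow (by positivity) (by linarith) (by linarith)
      have e3 : (2 * (1 + (k:ℝ))) ^ (α/2) = 2 ^ (α/2) * (1 + (k:ℝ)) ^ (α/2) :=
        Real.mul_rpow (by norm_num) (by positivity)
      have e4 : (2:ℝ) ^ (α/2) ≤ 2 := by
        calc (2:ℝ) ^ (α/2) ≤ (2:ℝ) ^ (1:ℝ) :=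
              Real.rpow_le_rpow_of_exponent_le one_le_two (by linarith)
          _ = 2 := Real.rpow_one 2
      have e5 : (1 + (k:ℝ)) ^ (α/2) ≤ (1 + (k:ℝ)) ^ α := by
        apply Real.rpow_le_rpow_of_exponent_le (by linarith) (by linarith)
      calc Real.exp (c₀ * r) ≤ (2 * (1 + (k:ℝ))) ^ (α/2) := e1.trans e2
        _ = 2 ^ (α/2) * (1 + (k:ℝ)) ^ (α/2) := e3
        _ ≤ 2 * (1 + (k:ℝ)) ^ α := by
            have h5 : 0 ≤ (1 + (k:ℝ)) ^ (α/2) := Real.rpow_nonneg (by positivity) _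
            nlinarith [Real.rpow_nonneg (show (0:ℝ) ≤ 1 + (k:ℝ) by positivity) α]
      -- done
    have hmain : ‖u x‖ ≤ M * c * (1 / (1 + (k:ℝ))) ^ α := by
      calc ‖u x‖ ≤ M * (r - rr k) := hkey
        _ ≤ M * (rr (k+1) - rr k) := by
            apply mul_le_mul_of_nonneg_left _ hM0; linarith
        _ ≤ M * (c * (1 / (1 + (k:ℝ))) ^ α) := mul_le_mul_of_nonneg_left hgap hM0
        _ = M * c * (1 / (1 + (k:ℝ))) ^ α := by ring
    have hpα : 0 < (1 + (k:ℝ)) ^ α := Real.rpow_pos_of_pos (by positivity) α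
    have hpow : (1 / (1 + (k:ℝ))) ^ α = ((1 + (k:ℝ)) ^ α)⁻¹ := by
      rw [one_div, Real.inv_rpow (by positivity)]
    have h6 : ‖u x‖ ≤ M * c / (1 + (k:ℝ)) ^ α := by
      rw [div_eq_mul_inv, ← hpow]; exact hmain
    have hfin : ‖u x‖ * Real.exp (c₀ * r) ≤ 2 * M * c := by
      calc ‖u x‖ * Real.exp (c₀ * r)
          ≤ (M * c / (1 + (k:ℝ)) ^ α) * (2 * (1 + (k:ℝ)) ^ α) :=
            mul_le_mul h6 hexp (Real.exp_pos _).le (by positivity)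
        _ = 2 * M * c := by field_simp
    have : ‖u x‖ ≤ 2 * M * c * Real.exp (-c₀ * r) := by
      rw [neg_mul, Real.exp_neg, ← div_eq_mul_inv, le_div_iff₀ (Real.exp_pos _)]
      exact hfin
    refine this.trans ?_
    apply mul_le_mul_of_nonneg_right _ (Real.exp_pos _).le
    have : 0 ≤ M * c * Real.exp (c₀ * c) := by positivity
    linarith
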